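/- Let Q_n be a Heine-Stieltjes polynomial of degree n (a polynomial solution of the generalized Lamé equation with Van Vleck polynomial V_n), let ε > 0, and let z_0 be a zero of Q_n lying at distance at least ε from the set 𝒜 ∪ 𝒱_n of zeros of A and V_n. If γ is the largest connected vertical trajectory arc of the quadratic differential ϖ_n = -(V_n/A)(dz)² through z_0 staying at distance ≥ ε from 𝒜 ∪ 𝒱_n, and along γ every bead of the associated necklace contains exactly one zero of Q_n, then the ϖ_n-length of γ satisfies ‖γ‖_{ϖ_n} ≤ (n+2)/λ_n, where λ_n = n + (α-1)/2 and ‖γ‖_{ϖ_n} = (1/π)∫_γ |V_n/A|^{1/2}(z)|dz|. -/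

import Mathlib

open Polynomial Complex MeasureTheory intervalIntegral

/-- Length bound for the string of a zero-carrying necklace: if `Q_n` is a Heine–Stieltjes
polynomial of degree `n`, `γ` is a vertical trajectory arc of `ϖ_n = -(V_n/A)(dz)²` staying
at distance `≥ ε` from the zeros of `A` and `V_n`, carrying a necklace of pairwise disjoint
beads at consecutive `ϖ_n`-distances `1/λ_n` each of which contains exactly one zero of
`Q_n`, then the `ϖ_n`-length of `γ` is at most `(n+2)/λ_n`, where `λ_n = n + (α-1)/2`. -/
theorem necklace_length_bound (p n : ℕ) (α : ℝ)
    (A B Vn Qn : Polynomial ℂ)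
    (hQdeg : Qn.natDegree = n) (hQne : Qn ≠ 0)
    (hODE : A * derivative (derivative Qn) + B * derivative Qn =
      C ((n : ℂ) * ((n : ℂ) + (α : ℂ) - 1)) * (Vn * Qn))
    (lam : ℝ) (hlam : lam = (n : ℝ) + (α - 1) / 2) (hlampos : 0 < lam)
    (ε : ℝ) (hε : 0 < ε)
    (γ γ' : ℝ → ℂ)
    (hder : ∀ t ∈ Set.Icc (0:ℝ) 1, HasDerivAt γ (γ' t) t)
    (h'cont : Continuous γ')
    -- `γ` stays at distance `≥ ε` from the zeros of `A` and `V_n`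
    (hfar : ∀ t ∈ Set.Icc (0:ℝ) 1, ∀ w : ℂ, (A.IsRoot w ∨ Vn.IsRoot w) → ε ≤ dist (γ t) w)
    -- the `ϖ_n`-length function along `γ`
    (len : ℝ → ℝ → ℝ)
    (hlen : ∀ s u : ℝ, len s u = (1 / Real.pi) * ∫ t in s..u,
      Real.sqrt (‖Vn.eval (γ t)‖ / ‖A.eval (γ t)‖) *
        ‖γ' t‖)
    -- the necklace: points `t 0 ≤ t 1 ≤ ... ≤ t (m-1)` along `γ` at `ϖ_n`-distance `1/λ_n`
    (m : ℕ) (hm : 0 < m) (t : Fin m → ℝ)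
    (ht : ∀ j, t j ∈ Set.Icc (0:ℝ) 1)
    (htmono : ∀ j k : Fin m, j ≤ k → t j ≤ t k)
    (hstep : ∀ (j : ℕ) (hj : j + 1 < m),
      lam * len (t ⟨j, Nat.lt_of_succ_lt hj⟩) (t ⟨j + 1, hj⟩) = 1)
    (hstart : lam * len 0 (t ⟨0, hm⟩) ≤ 1)
    (hend : lam * len (t ⟨m - 1, Nat.sub_lt hm one_pos⟩) 1 ≤ 1)
    -- the beads: pairwise disjoint sets, each containing exactly one zero of `Q_n`
    (ω : Fin m → Set ℂ)
    (hbead : ∀ j, γ (t j) ∈ ω j)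
    (hdisj : ∀ i j, i ≠ j → Disjoint (ω i) (ω j))
    (honezero : ∀ j, ∃! z : ℂ, z ∈ ω j ∧ Qn.IsRoot z) :
    len 0 1 ≤ ((n : ℝ) + 2) / lam := by

  -- the integrand
  set f : ℝ → ℝ := fun u =>
      Real.sqrt (‖Vn.eval (γ u)‖ / ‖A.eval (γ u)‖) *
        ‖γ' u‖ with hf
  -- continuity of the integrand on [0,1]
  have hfc : ContinuousOn f (Set.Icc (0:ℝ) 1) := by
    intro u hu
    have hγc : ContinuousAt γ u := (hder u hu).continuousAt
    have h1 : ContinuousAt (fun v => ‖Vn.eval (γ v)‖) u :=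
      ((continuous_norm.comp Vn.continuous).continuousAt).comp hγc
    have h2 : ContinuousAt (fun v => ‖A.eval (γ v)‖) u :=
      ((continuous_norm.comp A.continuous).continuousAt).comp hγc
    have hAne : ‖A.eval (γ u)‖ ≠ 0 := by
      intro h0
      have : A.IsRoot (γ u) := by
        simpa [Polynomial.IsRoot] using norm_eq_zero.mp h0
      have := hfar u hu (γ u) (Or.inl this)
      simp at this
      linarith
    have h3 : ContinuousAt (fun v => ‖Vn.eval (γ v)‖ /
        ‖A.eval (γ v)‖) u := h1.div h2 hAne
    exact ((Real.continuous_sqrt.continuousAt.comp h3).mul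
      ((continuous_norm.comp h'cont).continuousAt)).continuousWithinAt
  -- interval integrability between points of [0,1]
  have hint : ∀ a b : ℝ, a ∈ Set.Icc (0:ℝ) 1 → b ∈ Set.Icc (0:ℝ) 1 →
      IntervalIntegrable f volume a b := by
    intro a b ha hb
    have he : Set.uIcc (0:ℝ) 1 = Set.Icc 0 1 := Set.uIcc_of_le zero_le_one
    refine (hfc.mono ?_).intervalIntegrable
    rw [← he] at ha hb ⊢
    exact Set.uIcc_subset_uIcc ha hb
  -- additivity of `len`
  have hadd : ∀ a b c : ℝ, a ∈ Set.Icc (0:ℝ) 1 → b ∈ Set.Icc (0:ℝ) 1 →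
      c ∈ Set.Icc (0:ℝ) 1 → len a b + len b c = len a c := by
    intro a b c ha hb hc
    rw [hlen, hlen, hlen, ← mul_add]
    congr 1
    exact intervalIntegral.integral_add_adjacent_intervals
      (hint a b ha hb) (hint b c hb hc)
  have h01 : (0:ℝ) ∈ Set.Icc (0:ℝ) 1 := by norm_num
  have h11 : (1:ℝ) ∈ Set.Icc (0:ℝ) 1 := by norm_num
  -- each bead carries a unique zero; beads are disjoint, so m ≤ n
  have hmn : m ≤ n := by
    choose z hz hzu using honezero
    have hzroot : ∀ j, z j ∈ Qn.roots.toFinset := by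
      intro j
      rw [Multiset.mem_toFinset, Polynomial.mem_roots hQne]
      exact (hz j).2
    have hinj : Function.Injective z := by
      intro i j hij
      by_contra hne
      exact (hdisj i j hne).ne_of_mem (hz i).1 (hz j).1 (by rw [hij])
    calc m = Fintype.card (Fin m) := (Fintype.card_fin m).symm
      _ ≤ Qn.roots.toFinset.card := by
          rw [← Finset.card_univ]
          exact Finset.card_le_card_of_injOn z (fun a _ => hzroot a) hinj.injOn
      _ ≤ Multiset.card Qn.roots := Qn.roots.toFinset_card_le
      _ ≤ Qn.natDegree := Qn.card_roots'
      _ = n := hQdeg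
  -- inductive bound along the necklace
  have hclaim : ∀ j : ℕ, ∀ hj : j < m, lam * len 0 (t ⟨j, hj⟩) ≤ j + 1 := by
    intro j
    induction j with
    | zero => intro hj; simpa using hstart
    | succ k ih =>
        intro hj
        have hk : k < m := Nat.lt_of_succ_lt hj
        have := hadd 0 (t ⟨k, hk⟩) (t ⟨k+1, hj⟩) h01 (ht _) (ht _)
        rw [← this, mul_add, hstep k hj]
        have := ih hk
        push_cast
        linarith
  -- assemble
  have hlast : lam * len 0 1 ≤ (m : ℝ) + 1 := by
    have hsplit := hadd 0 (t ⟨m - 1, Nat.sub_lt hm one_pos⟩) 1 h01 (ht _) h11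
    rw [← hsplit, mul_add]
    have h1 := hclaim (m - 1) (Nat.sub_lt hm one_pos)
    have : ((m : ℝ) - 1) + 1 + 1 = (m : ℝ) + 1 := by ring
    have hcast : ((m - 1 : ℕ) : ℝ) = (m : ℝ) - 1 := by
      have := Nat.succ_pred_eq_of_pos hm
      push_cast [Nat.cast_sub hm]
      ring
    nlinarith [hend, h1]
  rw [le_div_iff₀ hlampos]
  have : (m : ℝ) + 1 ≤ (n : ℝ) + 2 := by
    have : (m : ℝ) ≤ (n : ℝ) := Nat.cast_le.mpr hmn
    linarith
  nlinarith [hlast]
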